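/- Let p, q ≥ 2 be integers. Let f : ℂ → ℂ be an entire function whose zero set f⁻¹(0) is infinite and all of whose zeros are simple, and let g : ℂ → ℂ be an entire function all of whose zeros are simple, such that A := g⁻¹(0) is an infinite subset of f⁻¹(0). Then the fiber product S(f,g) = {(z₁,z₂,z₃) ∈ ℂ³ : z₂^p = f(z₁) and z₃^q = g(z₁)} has exactly one end; concretely, for every compact subset K of S(f,g) there exists a compact subset K′ of S(f,g) with K ⊆ K′ such that the complement S(f,g) ∖ K′ is nonempty and connected. -/

import Mathlib

open Set MeasureTheory



private lemma log_lift {E : ℂ → ℂ} (hE : Differentiable ℂ E) {b : ℝ}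
    (hne : ∀ s : ℝ, 0 ≤ s → s ≤ b → E ↑s ≠ 0) :
    ContinuousOn (fun s : ℝ => ∫ τ in (0:ℝ)..s, deriv E ↑τ / E ↑τ) (Icc 0 b) ∧
      ∀ s ∈ Icc (0:ℝ) b,
        E ↑s = E 0 * Complex.exp (∫ τ in (0:ℝ)..s, deriv E ↑τ / E ↑τ) := by
  set u : ℝ → ℂ := fun τ => deriv E ↑τ / E ↑τ with hu_def
  set L : ℝ → ℂ := fun s => ∫ τ in (0:ℝ)..s, u τ with hL_def
  have hEc : Continuous fun τ : ℝ => E ↑τ := hE.continuous.comp Complex.continuous_ofReal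
  have hE'c : Continuous fun τ : ℝ => deriv E ↑τ :=
    ((hE.contDiff : ContDiff ℂ 1 E).continuous_deriv le_rfl).comp Complex.continuous_ofReal
  have hV : IsOpen {τ : ℝ | E ↑τ ≠ 0} := isOpen_compl_singleton.preimage hEc
  have hsub : Icc 0 b ⊆ {τ : ℝ | E ↑τ ≠ 0} := fun τ hτ => hne τ hτ.1 hτ.2
  have hu_cont : ContinuousOn u {τ : ℝ | E ↑τ ≠ 0} :=
    hE'c.continuousOn.div hEc.continuousOn fun τ hτ => hτ
  have hL_deriv : ∀ s ∈ Icc (0:ℝ) b, HasDerivAt L (u s) s := by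
    intro s hs
    refine intervalIntegral.integral_hasDerivAt_right ?_ ?_ ?_
    · refine ContinuousOn.intervalIntegrable ?_
      refine hu_cont.mono ?_
      rw [uIcc_of_le hs.1]
      exact fun τ hτ => hsub ⟨hτ.1, hτ.2.trans hs.2⟩
    · exact hu_cont.stronglyMeasurableAtFilter hV _ (hsub hs)
    · exact hu_cont.continuousAt (hV.mem_nhds (hsub hs))
  have hL_cont : ContinuousOn L (Icc 0 b) := fun s hs =>
    (hL_deriv s hs).continuousAt.continuousWithinAt
  refine ⟨hL_cont, ?_⟩
  have key : ∀ s ∈ Icc (0:ℝ) b, Complex.exp (-L s) * E ↑s = Complex.exp (-L 0) * E 0 := by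
    refine constant_of_has_deriv_right_zero ?_ ?_
    · exact (Complex.continuous_exp.comp_continuousOn hL_cont.neg).mul hEc.continuousOn
    · intro t ht
      have hdL := hL_deriv t ⟨ht.1, ht.2.le⟩
      have hdE : HasDerivAt (fun τ : ℝ => E ↑τ) (deriv E ↑t) t :=
        (hE ↑t).hasDerivAt.comp_ofReal
      have h1 : HasDerivAt (fun τ : ℝ => Complex.exp (-L τ))
          (Complex.exp (-L t) * -u t) t := hdL.neg.cexp
      have h2 := h1.mul hdE
      have hz : E ↑t ≠ 0 := hne t ht.1 ht.2.le
      have h3 : Complex.exp (-L t) * -u t * E ↑t + Complex.exp (-L t) * deriv E ↑t = 0 := by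
        rw [hu_def]
        field_simp
        ring
      rw [h3] at h2
      exact h2.hasDerivWithinAt
  intro s hs
  have h := key s hs
  have hL0 : L 0 = 0 := intervalIntegral.integral_same
  rw [hL0] at h
  simp only [neg_zero, Complex.exp_zero, one_mul] at h
  have hexp := Complex.exp_ne_zero (-L s)
  calc E ↑s = Complex.exp (L s) * (Complex.exp (-L s) * E ↑s) := by
        rw [← mul_assoc, ← Complex.exp_add]; simp
    _ = E 0 * Complex.exp (L s) := by rw [h]; ring


private lemma root_lift {E : ℂ → ℂ} (hE : Differentiable ℂ E) {p : ℕ} (hp : 0 < p)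
    (hne : ∀ s : ℝ, 0 ≤ s → s < 1 → E ↑s ≠ 0) {y : ℂ} (hy : y ^ p = E 0) :
    ∃ w : ℝ → ℂ, ContinuousOn w (Icc 0 1) ∧ w 0 = y ∧
      (∀ s ∈ Icc (0:ℝ) 1, w s ^ p = E ↑s) ∧ (E 1 = 0 → w 1 = 0) := by
  set L : ℝ → ℂ := fun s => ∫ τ in (0:ℝ)..s, deriv E ↑τ / E ↑τ with hL_def
  have hL0 : L 0 = 0 := intervalIntegral.integral_same
  have hpc : (p : ℂ) ≠ 0 := Nat.cast_ne_zero.2 hp.ne'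
  have hpow : ∀ s : ℝ, (y * Complex.exp (L s / p)) ^ p = E 0 * Complex.exp (L s) := by
    intro s
    rw [mul_pow, ← Complex.exp_nat_mul, mul_div_cancel₀ _ hpc, hy]
  by_cases hE1 : E 1 = 0
  · -- zero at the right endpoint
    refine ⟨fun s => if s < 1 then y * Complex.exp (L s / p) else 0, ?_, ?_, ?_, ?_⟩
    · -- continuity
      intro s₀ hs₀
      rcases lt_or_eq_of_le hs₀.2 with hlt | heq
      · -- s₀ < 1
        set b : ℝ := (s₀ + 1) / 2 with hb_def
        have hs₀b : s₀ < b := by rw [hb_def]; linarith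
        have hb1 : b < 1 := by rw [hb_def]; linarith
        obtain ⟨hLc, -⟩ := log_lift hE (b := b)
          (fun τ h0 hτ => hne τ h0 (lt_of_le_of_lt hτ hb1))
        have h1 : ContinuousWithinAt L (Icc 0 b) s₀ := hLc s₀ ⟨hs₀.1, hs₀b.le⟩
        have h2 : Icc (0:ℝ) b ∈ nhdsWithin s₀ (Icc 0 1) := by
          rw [mem_nhdsWithin]
          exact ⟨Iio b, isOpen_Iio, hs₀b, fun τ hτ => ⟨hτ.2.1, hτ.1.le⟩⟩
        have h3 : ContinuousWithinAt L (Icc 0 1) s₀ := h1.mono_of_mem_nhdsWithin h2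
        have h4 : ContinuousWithinAt (fun s => y * Complex.exp (L s / p)) (Icc 0 1) s₀ :=
          continuousWithinAt_const.mul
            (Complex.continuous_exp.continuousAt.comp_continuousWithinAt (h3.div_const _))
        refine h4.congr_of_eventuallyEq ?_ (by simp [if_pos hlt])
        filter_upwards [mem_nhdsWithin_of_mem_nhds (Iio_mem_nhds hlt)] with τ hτ
        rw [mem_Iio] at hτ
        simp [hτ]
      · -- s₀ = 1
        subst heq
        have hEc : Continuous fun τ : ℝ => E ↑τ := hE.continuous.comp Complex.continuous_ofReal
        have hnorm : ∀ s ∈ Icc (0:ℝ) 1,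
            ‖(if s < 1 then y * Complex.exp (L s / p) else 0 : ℂ)‖ = ‖E ↑s‖ ^ ((p:ℝ)⁻¹) := by
          intro s hs
          have hpow' : (if s < 1 then y * Complex.exp (L s / p) else 0 : ℂ) ^ p = E ↑s := by
            split_ifs with h
            · obtain ⟨-, hKey⟩ := log_lift hE (b := s)
                (fun τ h0 hτ => hne τ h0 (lt_of_le_of_lt hτ h))
              rw [hpow s, ← hKey s ⟨hs.1, le_refl s⟩]
            · have : s = 1 := le_antisymm hs.2 (not_lt.1 h)
              rw [this, zero_pow hp.ne']
              simpa using hE1.symm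
          have h1 : ‖(if s < 1 then y * Complex.exp (L s / p) else 0 : ℂ)‖ ^ p = ‖E ↑s‖ := by
            rw [← norm_pow, hpow']
          rw [← h1, Real.pow_rpow_inv_natCast (norm_nonneg _) hp.ne']
        have htd : Filter.Tendsto (fun s : ℝ => ‖E ↑s‖ ^ ((p:ℝ)⁻¹))
            (nhdsWithin 1 (Icc 0 1)) (nhds 0) := by
          have h1 : Filter.Tendsto (fun s : ℝ => ‖E ↑s‖) (nhdsWithin 1 (Icc 0 1)) (nhds 0) := by
            have h0 := (hEc.norm.tendsto 1).mono_left
              (nhdsWithin_le_nhds (s := Icc (0:ℝ) 1))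
            simpa [hE1] using h0
          have h2 : ContinuousAt (fun x : ℝ => x ^ ((p:ℝ)⁻¹)) 0 :=
            Real.continuousAt_rpow_const 0 _ (Or.inr (by positivity))
          have h3 := h2.tendsto.comp h1
          simpa [Function.comp_def, Real.zero_rpow (by positivity : ((p:ℝ)⁻¹) ≠ (0:ℝ))] using h3
        have htw : Filter.Tendsto (fun s : ℝ => if s < 1 then y * Complex.exp (L s / p) else 0)
            (nhdsWithin 1 (Icc 0 1)) (nhds 0) := by
          rw [tendsto_zero_iff_norm_tendsto_zero]
          refine htd.congr' ?_
          filter_upwards [self_mem_nhdsWithin] with s hs using (hnorm s hs).symm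
        have : (if (1:ℝ) < 1 then y * Complex.exp (L 1 / p) else 0) = (0:ℂ) := by simp
        rw [ContinuousWithinAt, this]
        exact htw
    · simp [hL0, zero_lt_one]
    · intro s hs
      show (if s < 1 then y * Complex.exp (L s / ↑p) else 0) ^ p = E ↑s
      split_ifs with h
      · obtain ⟨-, hKey⟩ := log_lift hE (b := s)
          (fun τ h0 hτ => hne τ h0 (lt_of_le_of_lt hτ h))
        rw [hpow s, ← hKey s ⟨hs.1, le_refl s⟩]
      · have : s = 1 := le_antisymm hs.2 (not_lt.1 h)
        rw [this, zero_pow hp.ne']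
        simpa using hE1.symm
    · intro _; simp
  · -- no zero anywhere on [0,1]
    have hne' : ∀ s : ℝ, 0 ≤ s → s ≤ 1 → E ↑s ≠ 0 := by
      intro s h0 h1
      rcases lt_or_eq_of_le h1 with h | h
      · exact hne s h0 h
      · rw [h]; exact_mod_cast hE1
    obtain ⟨hLc, hKey⟩ := log_lift hE (b := 1) hne'
    refine ⟨fun s => y * Complex.exp (L s / p), ?_, ?_, ?_, fun h => absurd h hE1⟩
    · exact continuousOn_const.mul
        (Complex.continuous_exp.comp_continuousOn (hLc.div_const _))
    · simp [hL0]
    · intro s hs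
      rw [hpow s, ← hKey s hs]


private lemma zeros_finite_in {F : ℂ → ℂ} (hF : Differentiable ℂ F)
    (hsimple : ∀ z, F z = 0 → deriv F z ≠ 0) {K : Set ℂ} (hK : IsCompact K) :
    (F ⁻¹' {0} ∩ K).Finite := by
  by_contra hinf
  rw [← Set.not_infinite, not_not] at hinf
  obtain ⟨z₀, -, hacc⟩ := hinf.exists_accPt_of_subset_isCompact hK inter_subset_right
  have hclosed : IsClosed (F ⁻¹' {0}) := isClosed_singleton.preimage hF.continuous
  have hz₀ : F z₀ = 0 := by
    have h1 : ClusterPt z₀ (Filter.principal (F ⁻¹' {0} ∩ K)) := hacc.clusterPt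
    have h2 : z₀ ∈ closure (F ⁻¹' {0} ∩ K) := mem_closure_iff_clusterPt.2 h1
    exact (hclosed.closure_subset_iff.2 inter_subset_left) h2
  have hslope := hasDerivAt_iff_tendsto_slope.1 (hF z₀).hasDerivAt
  have hev : ∀ᶠ w in nhdsWithin z₀ {z₀}ᶜ, F w ≠ 0 := by
    filter_upwards [hslope.eventually_ne (hsimple z₀ hz₀),
      self_mem_nhdsWithin] with w hw hw'
    intro hFw
    apply hw
    rw [slope_def_field, hFw, hz₀]
    simp
  have : ∀ᶠ w in nhdsWithin z₀ {z₀}ᶜ ⊓ Filter.principal (F ⁻¹' {0} ∩ K), False := by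
    have h1 : ∀ᶠ w in nhdsWithin z₀ {z₀}ᶜ ⊓ Filter.principal (F ⁻¹' {0} ∩ K), F w ≠ 0 :=
      hev.filter_mono inf_le_left
    have h2 : ∀ᶠ w in nhdsWithin z₀ {z₀}ᶜ ⊓ Filter.principal (F ⁻¹' {0} ∩ K),
        w ∈ F ⁻¹' {0} ∩ K := by
      refine Filter.eventually_inf_principal.2 (Filter.Eventually.of_forall fun w hw => hw)
    filter_upwards [h1, h2] with w hw1 hw2
    exact hw1 hw2.1
  have hne : (nhdsWithin z₀ {z₀}ᶜ ⊓ Filter.principal (F ⁻¹' {0} ∩ K)).NeBot := hacc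
  exact (this.exists).elim fun w hw => hw

private lemma zeros_countable {F : ℂ → ℂ} (hF : Differentiable ℂ F)
    (hsimple : ∀ z, F z = 0 → deriv F z ≠ 0) : (F ⁻¹' {0}).Countable := by
  have hcov : F ⁻¹' {0} = ⋃ n : ℕ, F ⁻¹' {0} ∩ Metric.closedBall 0 n := by
    ext z
    simp only [mem_iUnion, mem_inter_iff, Metric.mem_closedBall]
    constructor
    · intro hz
      obtain ⟨n, hn⟩ := exists_nat_ge (dist z 0)
      exact ⟨n, hz, hn⟩
    · rintro ⟨n, hn, -⟩; exact hn
  rw [hcov]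
  exact countable_iUnion fun n =>
    (zeros_finite_in hF hsimple (isCompact_closedBall 0 n)).countable

private lemma zeros_exists_large {F : ℂ → ℂ} (hF : Differentiable ℂ F)
    (hsimple : ∀ z, F z = 0 → deriv F z ≠ 0) (hinf : (F ⁻¹' {0}).Infinite) (r : ℝ) :
    ∃ a, F a = 0 ∧ r < ‖a‖ := by
  by_contra h
  push_neg at h
  have hsub : F ⁻¹' {0} ⊆ F ⁻¹' {0} ∩ Metric.closedBall 0 r := by
    intro z hz
    refine ⟨hz, ?_⟩
    rw [Metric.mem_closedBall, dist_zero_right]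
    exact h z hz
  exact hinf ((zeros_finite_in hF hsimple (isCompact_closedBall 0 r)).subset hsub)

private lemma countable_exp_preimage {Z : Set ℂ} (hZ : Z.Countable) :
    (Complex.exp ⁻¹' Z).Countable := by
  have hcov : Complex.exp ⁻¹' Z = ⋃ z ∈ Z, Complex.exp ⁻¹' {z} := by
    ext w; simp
  rw [hcov]
  refine hZ.biUnion fun z hz => ?_
  rcases Set.eq_empty_or_nonempty (Complex.exp ⁻¹' {z}) with h | ⟨w₀, hw₀⟩
  · simp [h]
  · refine (Set.countable_range fun n : ℤ => w₀ + n * (2 * Real.pi * Complex.I)).mono ?_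
    intro w hw
    have hee : Complex.exp w = Complex.exp w₀ := by
      rw [mem_preimage, mem_singleton_iff] at hw hw₀
      rw [hw, hw₀]
    obtain ⟨n, hn⟩ := Complex.exp_eq_exp_iff_exists_int.1 hee
    exact ⟨n, hn.symm⟩


private lemma root_lift_to {E : ℂ → ℂ} (hE : Differentiable ℂ E) {p : ℕ} (hp : 0 < p)
    (hne : ∀ s : ℝ, 0 ≤ s → s < 1 → E ↑s ≠ 0) {y : ℂ} (hy : y ^ p = E 1) :
    ∃ w : ℝ → ℂ, ContinuousOn w (Icc 0 1) ∧ w 1 = y ∧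
      ∀ s ∈ Icc (0:ℝ) 1, w s ^ p = E ↑s := by
  by_cases hE1 : E 1 = 0
  · have hy0 : y = 0 := by
      have h0 : y ^ p = 0 := by rw [hy, hE1]
      exact pow_eq_zero_iff hp.ne' |>.1 h0
    obtain ⟨v, hv⟩ := IsAlgClosed.exists_pow_nat_eq (E 0) hp
    obtain ⟨w, hwc, -, hwpow, hw1⟩ := root_lift hE hp hne hv
    exact ⟨w, hwc, by rw [hw1 hE1, hy0], hwpow⟩
  · set E' : ℂ → ℂ := fun z => E (1 - z) with hE'def
    have hE' : Differentiable ℂ E' := hE.comp ((differentiable_const (1:ℂ)).sub differentiable_id)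
    have hne' : ∀ s : ℝ, 0 ≤ s → s < 1 → E' ↑s ≠ 0 := by
      intro s hs0 hs1
      have hcast : (1:ℂ) - (s:ℂ) = ((1 - s : ℝ) : ℂ) := by push_cast; ring
      rw [hE'def]
      simp only
      rw [hcast]
      rcases eq_or_lt_of_le hs0 with h | h
      · rw [← h]; simpa using hE1
      · exact hne (1 - s) (by linarith) (by linarith)
    have hy' : y ^ p = E' 0 := by rw [hE'def]; simpa using hy
    obtain ⟨w', hwc, hw0, hwpow, -⟩ := root_lift hE' hp hne' hy'
    refine ⟨fun s => w' (1 - s), ?_, by simpa using hw0, ?_⟩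
    · exact hwc.comp (continuous_const.sub continuous_id).continuousOn
        (fun s hs => ⟨by linarith [hs.2], by linarith [hs.1]⟩)
    · intro s hs
      have h1 := hwpow (1 - s) ⟨by linarith [hs.2], by linarith [hs.1]⟩
      rw [h1, hE'def]
      norm_num


private lemma bad_param_subsingleton {D z e : ℂ} (hD : D ≠ 0) {μ : ℝ} (hμ : μ ≠ 0)
    (m : ℝ → ℂ) (hm : ∀ t : ℝ, m t - e = D * (↑μ + ↑t * Complex.I)) :
    {t : ℝ | ∃ s : ℝ, 0 ≤ s ∧ s < 1 ∧ z = m t + ↑s * (e - m t)}.Subsingleton := by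
  intro t ht t' ht'
  obtain ⟨s, hs0, hs1, hzs⟩ := ht
  obtain ⟨s', hs0', hs1', hzs'⟩ := ht'
  have h1 : z - e = (1 - (s:ℂ)) * (D * (↑μ + ↑t * Complex.I)) := by
    rw [← hm t]; linear_combination hzs
  have h1' : z - e = (1 - (s':ℂ)) * (D * (↑μ + ↑t' * Complex.I)) := by
    rw [← hm t']; linear_combination hzs'
  have h2 : D * ((1 - (s:ℂ)) * (↑μ + ↑t * Complex.I)) =
      D * ((1 - (s':ℂ)) * (↑μ + ↑t' * Complex.I)) := by
    linear_combination h1.symm.trans h1'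
  have h3 := mul_left_cancel₀ hD h2
  have hre := congrArg Complex.re h3
  have him := congrArg Complex.im h3
  simp only [Complex.mul_re, Complex.mul_im, Complex.add_re, Complex.add_im, Complex.sub_re,
    Complex.sub_im, Complex.one_re, Complex.one_im, Complex.ofReal_re, Complex.ofReal_im,
    Complex.mul_I_re, Complex.mul_I_im, Complex.I_re, Complex.I_im] at hre him
  ring_nf at hre him
  have hss : s = s' := by
    have h4 : (1 - s) * μ = (1 - s') * μ := by linarith
    have := mul_right_cancel₀ hμ h4
    linarith
  rw [hss] at him
  have h1s : (1 - s') ≠ 0 := ne_of_gt (by linarith)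
  have h5 : (1 - s') * t = (1 - s') * t' := by linarith
  exact mul_left_cancel₀ h1s h5


/-- Theorem 4.3 (1).
If moreover `A = g⁻¹(0)` is infinite, then the fiber product `S(f,g)` has exactly one end:
for every compact `K ⊆ S(f,g)` there is a compact `K′ ⊇ K` such that the complement
`S(f,g) ∖ K′` is nonempty and connected. -/
theorem fiber_product_one_end
    (p q : ℕ) (hp : 2 ≤ p) (hq : 2 ≤ q)
    (f g : ℂ → ℂ) (hf : Differentiable ℂ f) (hg : Differentiable ℂ g)
    (hfzero : (f ⁻¹' {0}).Infinite)
    (hfsimple : ∀ z, f z = 0 → deriv f z ≠ 0)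
    (hgsimple : ∀ z, g z = 0 → deriv g z ≠ 0)
    (hAf : g ⁻¹' {0} ⊆ f ⁻¹' {0})
    (hAinf : (g ⁻¹' {0}).Infinite) :
    ∀ K : Set {z : ℂ × ℂ × ℂ // z.2.1 ^ p = f z.1 ∧ z.2.2 ^ q = g z.1},
      IsCompact K → ∃ K' : Set {z : ℂ × ℂ × ℂ // z.2.1 ^ p = f z.1 ∧ z.2.2 ^ q = g z.1},
        IsCompact K' ∧ K ⊆ K' ∧ IsConnected K'ᶜ := by
  classical
  intro K hK
  have hp0 : 0 < p := by omega
  have hq0 : 0 < q := by omega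
  have hg0 : ∀ z, g z = 0 → f z = 0 := fun z hz => hAf (by simpa using hz)
  obtain ⟨r₀, hr₀⟩ : ∃ r₀ : ℝ, ∀ s ∈ K, ‖(s : ℂ × ℂ × ℂ).1‖ ≤ r₀ := by
    have hcont : Continuous fun s : {z : ℂ × ℂ × ℂ // z.2.1 ^ p = f z.1 ∧ z.2.2 ^ q = g z.1} =>
        ‖(s : ℂ × ℂ × ℂ).1‖ := (continuous_fst.comp continuous_subtype_val).norm
    obtain ⟨r₀, hr₀⟩ := (hK.image hcont).bddAbove
    exact ⟨r₀, fun s hs => hr₀ (mem_image_of_mem _ hs)⟩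
  set R : ℝ := max 1 r₀ with hR_def
  have hR1 : (1:ℝ) ≤ R := le_max_left _ _
  have hR0 : (0:ℝ) < R := lt_of_lt_of_le one_pos hR1
  refine ⟨{s | ‖(s : ℂ × ℂ × ℂ).1‖ ≤ R}, ?_, ?_, ?_⟩
  · -- compactness
    rw [Subtype.isCompact_iff]
    have himg : (Subtype.val '' {s : {z : ℂ × ℂ × ℂ // z.2.1 ^ p = f z.1 ∧ z.2.2 ^ q = g z.1} |
        ‖(s : ℂ × ℂ × ℂ).1‖ ≤ R}) =
        {z : ℂ × ℂ × ℂ | (z.2.1 ^ p = f z.1 ∧ z.2.2 ^ q = g z.1) ∧ ‖z.1‖ ≤ R} := by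
      ext z
      constructor
      · rintro ⟨⟨w, hw⟩, hmem, rfl⟩; exact ⟨hw, hmem⟩
      · rintro ⟨hw, hz⟩; exact ⟨⟨z, hw⟩, hz, rfl⟩
    rw [himg, Metric.isCompact_iff_isClosed_bounded]
    constructor
    · have hset : {z : ℂ × ℂ × ℂ | (z.2.1 ^ p = f z.1 ∧ z.2.2 ^ q = g z.1) ∧ ‖z.1‖ ≤ R} =
          ({z : ℂ × ℂ × ℂ | z.2.1 ^ p = f z.1} ∩ {z | z.2.2 ^ q = g z.1}) ∩
            {z | ‖z.1‖ ≤ R} := by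
        ext z; simp [mem_inter_iff, and_assoc]
      rw [hset]
      refine IsClosed.inter (IsClosed.inter ?_ ?_) ?_
      · exact isClosed_eq (((continuous_fst.comp continuous_snd).pow p))
          (hf.continuous.comp continuous_fst)
      · exact isClosed_eq (((continuous_snd.comp continuous_snd).pow q))
          (hg.continuous.comp continuous_fst)
      · exact isClosed_le continuous_fst.norm continuous_const
    · obtain ⟨Mf, hMf⟩ := (isCompact_closedBall (0:ℂ) R).exists_bound_of_continuousOn
        hf.continuous.continuousOn
      obtain ⟨Mg, hMg⟩ := (isCompact_closedBall (0:ℂ) R).exists_bound_of_continuousOn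
        hg.continuous.continuousOn
      rw [isBounded_iff_forall_norm_le]
      refine ⟨max R (max (max 1 Mf) (max 1 Mg)), ?_⟩
      rintro z ⟨⟨hz2, hz3⟩, hz1⟩
      have hball : z.1 ∈ Metric.closedBall (0:ℂ) R := by
        rwa [Metric.mem_closedBall, dist_zero_right]
      have h2 : ‖z.2.1‖ ≤ max 1 Mf := by
        by_cases h1 : ‖z.2.1‖ ≤ 1
        · exact le_trans h1 (le_max_left _ _)
        · push_neg at h1
          refine le_trans ?_ (le_max_right 1 Mf)
          calc ‖z.2.1‖ ≤ ‖z.2.1‖ ^ p := le_self_pow₀ h1.le hp0.ne'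
            _ = ‖f z.1‖ := by rw [← norm_pow, hz2]
            _ ≤ Mf := hMf z.1 hball
      have h3 : ‖z.2.2‖ ≤ max 1 Mg := by
        by_cases h1 : ‖z.2.2‖ ≤ 1
        · exact le_trans h1 (le_max_left _ _)
        · push_neg at h1
          refine le_trans ?_ (le_max_right 1 Mg)
          calc ‖z.2.2‖ ≤ ‖z.2.2‖ ^ q := le_self_pow₀ h1.le hq0.ne'
            _ = ‖g z.1‖ := by rw [← norm_pow, hz3]
            _ ≤ Mg := hMg z.1 hball
      rw [Prod.norm_def, Prod.norm_def]
      refine max_le (le_max_left _ _ |>.trans' hz1) (le_trans (max_le ?_ ?_) (le_max_right _ _))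
      · exact h2.trans (le_max_left _ _)
      · exact h3.trans (le_max_right _ _)
  · -- K ⊆ K'
    intro s hs
    exact le_trans (hr₀ s hs) (le_max_right 1 r₀)
  · -- connectivity of complement
    obtain ⟨a, hga, haR⟩ := zeros_exists_large hg hgsimple hAinf R
    have hfa : f a = 0 := hg0 a hga
    have ha0 : a ≠ 0 := by
      intro h
      rw [h, norm_zero] at haR
      linarith
    set W : Set {z : ℂ × ℂ × ℂ // z.2.1 ^ p = f z.1 ∧ z.2.2 ^ q = g z.1} :=
      {s | R < ‖(s : ℂ × ℂ × ℂ).1‖} with hW_def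
    have hWc : {s : {z : ℂ × ℂ × ℂ // z.2.1 ^ p = f z.1 ∧ z.2.2 ^ q = g z.1} |
        ‖(s : ℂ × ℂ × ℂ).1‖ ≤ R}ᶜ = W := by
      ext s; simp [hW_def, not_le]
    rw [hWc]
    have hPamem : ((a, 0, 0) : ℂ × ℂ × ℂ).2.1 ^ p = f (a, (0:ℂ), (0:ℂ)).1 ∧
        ((a, 0, 0) : ℂ × ℂ × ℂ).2.2 ^ q = g (a, (0:ℂ), (0:ℂ)).1 := by
      constructor
      · show (0:ℂ) ^ p = f a
        rw [hfa, zero_pow hp0.ne']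
      · show (0:ℂ) ^ q = g a
        rw [hga, zero_pow hq0.ne']
    set Pa : {z : ℂ × ℂ × ℂ // z.2.1 ^ p = f z.1 ∧ z.2.2 ^ q = g z.1} :=
      ⟨(a, 0, 0), hPamem⟩ with hPa_def
    have hPaW : Pa ∈ W := by
      simp only [hW_def, mem_setOf_eq, hPa_def]
      exact haR
    have hZt : (Complex.exp ⁻¹' (f ⁻¹' {0})).Countable :=
      countable_exp_preimage (zeros_countable hf hfsimple)
    -- generic path constructor along an exponential segment
    have mk_joined : ∀ c d : ℂ, Real.log R < c.re → Real.log R < d.re →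
        ∀ w₂ w₃ : ℝ → ℂ, ContinuousOn w₂ (Icc 0 1) → ContinuousOn w₃ (Icc 0 1) →
        (∀ s ∈ Icc (0:ℝ) 1, w₂ s ^ p = f (Complex.exp (c + (s:ℂ) * (d - c)))) →
        (∀ s ∈ Icc (0:ℝ) 1, w₃ s ^ q = g (Complex.exp (c + (s:ℂ) * (d - c)))) →
        ∀ u v : {z : ℂ × ℂ × ℂ // z.2.1 ^ p = f z.1 ∧ z.2.2 ^ q = g z.1},
          (u : ℂ × ℂ × ℂ) = (Complex.exp c, w₂ 0, w₃ 0) →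
          (v : ℂ × ℂ × ℂ) = (Complex.exp d, w₂ 1, w₃ 1) → JoinedIn W u v := by
      intro c d hc hd w₂ w₃ hw₂c hw₃c hw₂ hw₃ u v hu hv
      have hre : ∀ s : ℝ, s ∈ Icc (0:ℝ) 1 → Real.log R < (c + (s:ℂ) * (d - c)).re := by
        intro s hs
        have hcompute : (c + (s:ℂ) * (d - c)).re = c.re + s * (d.re - c.re) := by
          simp [Complex.add_re, Complex.mul_re, Complex.ofReal_re, Complex.ofReal_im,
            Complex.sub_re, Complex.sub_im]
        rw [hcompute]
        rcases le_total c.re d.re with hcd | hcd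
        · nlinarith [mul_nonneg hs.1 (sub_nonneg.2 hcd)]
        · nlinarith [mul_nonneg (sub_nonneg.2 hs.2) (sub_nonneg.2 hcd)]
      have hmemW : ∀ s : ℝ, s ∈ Icc (0:ℝ) 1 → R < ‖Complex.exp (c + (s:ℂ) * (d - c))‖ := by
        intro s hs
        rw [Complex.norm_exp]
        calc R = Real.exp (Real.log R) := (Real.exp_log hR0).symm
          _ < _ := Real.exp_lt_exp.2 (hre s hs)
      have hmem : ∀ t : unitInterval,
          ((Complex.exp (c + ((t : ℝ) : ℂ) * (d - c)), w₂ t, w₃ t) : ℂ × ℂ × ℂ).2.1 ^ p =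
            f (Complex.exp (c + ((t : ℝ) : ℂ) * (d - c)), w₂ (t : ℝ), w₃ (t : ℝ)).1 ∧
          ((Complex.exp (c + ((t : ℝ) : ℂ) * (d - c)), w₂ t, w₃ t) : ℂ × ℂ × ℂ).2.2 ^ q =
            g (Complex.exp (c + ((t : ℝ) : ℂ) * (d - c)), w₂ (t : ℝ), w₃ (t : ℝ)).1 :=
        fun t => ⟨hw₂ t t.2, hw₃ t t.2⟩
      refine ⟨⟨⟨fun t : unitInterval =>
        ⟨(Complex.exp (c + ((t : ℝ) : ℂ) * (d - c)), w₂ t, w₃ t), hmem t⟩, ?_⟩, ?_, ?_⟩, ?_⟩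
      · refine Continuous.subtype_mk ?_ _
        refine Continuous.prodMk ?_ (Continuous.prodMk ?_ ?_)
        · exact Complex.continuous_exp.comp (continuous_const.add
            ((Complex.continuous_ofReal.comp continuous_subtype_val).mul continuous_const))
        · exact hw₂c.comp_continuous continuous_subtype_val fun t => t.2
        · exact hw₃c.comp_continuous continuous_subtype_val fun t => t.2
      · apply Subtype.ext
        rw [hu]
        simp
      · apply Subtype.ext
        rw [hv]
        simp
      · intro t
        simp only [hW_def, mem_setOf_eq]
        simpa using hmemW (t : ℝ) t.2
    -- a lift along a segment with prescribed values above the far endpoint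
    have piece_to : ∀ c d : ℂ, Real.log R < c.re → Real.log R < d.re →
        (∀ s : ℝ, 0 ≤ s → s < 1 → f (Complex.exp (c + (s:ℂ) * (d - c))) ≠ 0) →
        ∀ y₂ y₃ : ℂ, y₂ ^ p = f (Complex.exp d) → y₃ ^ q = g (Complex.exp d) →
        ∀ v : {z : ℂ × ℂ × ℂ // z.2.1 ^ p = f z.1 ∧ z.2.2 ^ q = g z.1},
          (v : ℂ × ℂ × ℂ) = (Complex.exp d, y₂, y₃) →
        ∃ v₂ v₃ : ℂ, v₂ ^ p = f (Complex.exp c) ∧ v₃ ^ q = g (Complex.exp c) ∧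
          ∃ u : {z : ℂ × ℂ × ℂ // z.2.1 ^ p = f z.1 ∧ z.2.2 ^ q = g z.1},
            (u : ℂ × ℂ × ℂ) = (Complex.exp c, v₂, v₃) ∧ JoinedIn W u v := by
      intro c d hc hd hne y₂ y₃ hy₂ hy₃ v hv
      set Ef : ℂ → ℂ := fun z => f (Complex.exp (c + z * (d - c))) with hEf_def
      set Eg : ℂ → ℂ := fun z => g (Complex.exp (c + z * (d - c))) with hEg_def
      have haff : Differentiable ℂ fun z : ℂ => Complex.exp (c + z * (d - c)) :=
        Complex.differentiable_exp.comp ((differentiable_const c).add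
          (differentiable_id.mul_const (d - c)))
      have hEfd : Differentiable ℂ Ef := hf.comp haff
      have hEgd : Differentiable ℂ Eg := hg.comp haff
      have hcd : c + (1:ℂ) * (d - c) = d := by ring
      have hy₂' : y₂ ^ p = Ef 1 := by
        rw [hEf_def]; simp only; rw [hcd]; exact hy₂
      have hy₃' : y₃ ^ q = Eg 1 := by
        rw [hEg_def]; simp only; rw [hcd]; exact hy₃
      have hnef : ∀ s : ℝ, 0 ≤ s → s < 1 → Ef ↑s ≠ 0 := fun s h0 h1 => hne s h0 h1
      have hneg : ∀ s : ℝ, 0 ≤ s → s < 1 → Eg ↑s ≠ 0 := fun s h0 h1 hz =>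
        hnef s h0 h1 (hg0 _ hz)
      obtain ⟨w₂, hw₂c, hw₂1, hw₂pow⟩ := root_lift_to hEfd hp0 hnef hy₂'
      obtain ⟨w₃, hw₃c, hw₃1, hw₃pow⟩ := root_lift_to hEgd hq0 hneg hy₃'
      have hc0 : c + (0:ℂ) * (d - c) = c := by ring
      have hv₂ : w₂ 0 ^ p = f (Complex.exp c) := by
        have h0 := hw₂pow 0 ⟨le_refl 0, zero_le_one⟩
        rw [hEf_def] at h0
        simp only at h0
        rwa [Complex.ofReal_zero, hc0] at h0
      have hv₃ : w₃ 0 ^ q = g (Complex.exp c) := by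
        have h0 := hw₃pow 0 ⟨le_refl 0, zero_le_one⟩
        rw [hEg_def] at h0
        simp only at h0
        rwa [Complex.ofReal_zero, hc0] at h0
      refine ⟨w₂ 0, w₃ 0, hv₂, hv₃,
        ⟨(Complex.exp c, w₂ 0, w₃ 0), hv₂, hv₃⟩, rfl, ?_⟩
      refine mk_joined c d hc hd w₂ w₃ hw₂c hw₃c (fun s hs => hw₂pow s hs)
        (fun s hs => hw₃pow s hs) _ _ rfl ?_
      rw [hv, hw₂1, hw₃1]
    -- a lift along a segment with prescribed values above the near endpoint,
    -- ending at a common zero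
    have piece_from : ∀ c d : ℂ, Real.log R < c.re → Real.log R < d.re →
        (∀ s : ℝ, 0 ≤ s → s < 1 → f (Complex.exp (c + (s:ℂ) * (d - c))) ≠ 0) →
        f (Complex.exp d) = 0 → g (Complex.exp d) = 0 →
        ∀ v₂ v₃ : ℂ, v₂ ^ p = f (Complex.exp c) → v₃ ^ q = g (Complex.exp c) →
        ∀ u v : {z : ℂ × ℂ × ℂ // z.2.1 ^ p = f z.1 ∧ z.2.2 ^ q = g z.1},
          (u : ℂ × ℂ × ℂ) = (Complex.exp c, v₂, v₃) →
          (v : ℂ × ℂ × ℂ) = (Complex.exp d, 0, 0) → JoinedIn W u v := by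
      intro c d hc hd hne hfd hgd v₂ v₃ hv₂ hv₃ u v hu hv
      set Ef : ℂ → ℂ := fun z => f (Complex.exp (c + z * (d - c))) with hEf_def
      set Eg : ℂ → ℂ := fun z => g (Complex.exp (c + z * (d - c))) with hEg_def
      have haff : Differentiable ℂ fun z : ℂ => Complex.exp (c + z * (d - c)) :=
        Complex.differentiable_exp.comp ((differentiable_const c).add
          (differentiable_id.mul_const (d - c)))
      have hEfd : Differentiable ℂ Ef := hf.comp haff
      have hEgd : Differentiable ℂ Eg := hg.comp haff
      have hcd : c + (1:ℂ) * (d - c) = d := by ring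
      have hc0 : c + (0:ℂ) * (d - c) = c := by ring
      have hEf1 : Ef 1 = 0 := by rw [hEf_def]; simp only; rw [hcd]; exact hfd
      have hEg1 : Eg 1 = 0 := by rw [hEg_def]; simp only; rw [hcd]; exact hgd
      have hv₂' : v₂ ^ p = Ef 0 := by
        rw [hEf_def]; simp only; rw [hc0]; exact hv₂
      have hv₃' : v₃ ^ q = Eg 0 := by
        rw [hEg_def]; simp only; rw [hc0]; exact hv₃
      have hnef : ∀ s : ℝ, 0 ≤ s → s < 1 → Ef ↑s ≠ 0 := fun s h0 h1 => hne s h0 h1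
      have hneg : ∀ s : ℝ, 0 ≤ s → s < 1 → Eg ↑s ≠ 0 := fun s h0 h1 hz =>
        hnef s h0 h1 (hg0 _ hz)
      obtain ⟨w₂, hw₂c, hw₂0, hw₂pow, hw₂1⟩ := root_lift hEfd hp0 hnef hv₂'
      obtain ⟨w₃, hw₃c, hw₃0, hw₃pow, hw₃1⟩ := root_lift hEgd hq0 hneg hv₃'
      refine mk_joined c d hc hd w₂ w₃ hw₂c hw₃c (fun s hs => hw₂pow s hs)
        (fun s hs => hw₃pow s hs) u v ?_ ?_
      · rw [hu, hw₂0, hw₃0]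
      · rw [hv, hw₂1 hEf1, hw₃1 hEg1]
    -- now prove path-connectedness of W
    refine IsPathConnected.isConnected ⟨Pa, hPaW, ?_⟩
    intro s hs
    obtain ⟨⟨x, y₂, y₃⟩, hxy⟩ := s
    obtain ⟨h₂, h₃⟩ := hxy
    have hxR : R < ‖x‖ := hs
    by_cases hxa : x = a
    · subst hxa
      have hfx : f x = 0 := hfa
      have hy₂0 : y₂ = 0 := by
        have : y₂ ^ p = 0 := by rw [h₂, hfx]
        exact pow_eq_zero_iff hp0.ne' |>.1 this
      have hy₃0 : y₃ = 0 := by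
        have : y₃ ^ q = 0 := by rw [h₃, hga]
        exact pow_eq_zero_iff hq0.ne' |>.1 this
      have heq : (⟨(x, y₂, y₃), ⟨h₂, h₃⟩⟩ :
          {z : ℂ × ℂ × ℂ // z.2.1 ^ p = f z.1 ∧ z.2.2 ^ q = g z.1}) = Pa := by
        apply Subtype.ext
        show (x, y₂, y₃) = (x, 0, 0)
        rw [hy₂0, hy₃0]
      rw [heq]
      exact JoinedIn.refl hPaW
    · -- main case
      have hx0 : x ≠ 0 := by
        intro h
        rw [h, norm_zero] at hxR
        linarith
      set xt : ℂ := Complex.log x with hxt_def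
      set aL : ℂ := Complex.log a with haL_def
      have hex : Complex.exp xt = x := Complex.exp_log hx0
      have hea : Complex.exp aL = a := Complex.exp_log ha0
      have hxre : Real.log R < xt.re := by
        rw [hxt_def, Complex.log_re]
        exact Real.log_lt_log hR0 (by assumption)
      have hare : Real.log R < aL.re := by
        rw [haL_def, Complex.log_re]
        exact Real.log_lt_log hR0 (by assumption)
      set D : ℂ := aL - xt with hD_def
      have hDne : D ≠ 0 := by
        rw [hD_def, sub_ne_zero]
        intro h
        exact hxa (by rw [← hex, ← hea, h])
      set mpt : ℝ → ℂ := fun t => xt + (((1/2 : ℝ) : ℂ) + (t:ℂ) * Complex.I) * D with hmpt_def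
      have hmx : ∀ t : ℝ, mpt t - xt = D * (↑(1/2 : ℝ) + ↑t * Complex.I) := by
        intro t
        rw [hmpt_def]
        ring
      have hma : ∀ t : ℝ, mpt t - aL = D * (↑(-(1/2) : ℝ) + ↑t * Complex.I) := by
        intro t
        rw [hmpt_def, hD_def]
        push_cast
        ring
      have hmptre : ∀ t : ℝ, (mpt t).re = xt.re + D.re / 2 - t * D.im := by
        intro t
        rw [hmpt_def]
        simp [Complex.add_re, Complex.mul_re, Complex.add_im, Complex.I_re, Complex.I_im,
          Complex.ofReal_re, Complex.ofReal_im]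
        ring
      have hmean : Real.log R < xt.re + D.re / 2 := by
        rw [hD_def, Complex.sub_re]
        linarith
      set ε : ℝ := (xt.re + D.re / 2 - Real.log R) / (1 + |D.im|) with hε_def
      have hεpos : 0 < ε := by
        rw [hε_def]
        apply div_pos (by linarith) (by positivity)
      -- choose a good parameter t avoiding the bad countable sets
      have hBad : ∀ (e : ℂ) (μ : ℝ), μ ≠ 0 → (∀ t : ℝ, mpt t - e = D * (↑μ + ↑t * Complex.I)) →
          {t : ℝ | ∃ s : ℝ, 0 ≤ s ∧ s < 1 ∧
            f (Complex.exp (mpt t + ↑s * (e - mpt t))) = 0}.Countable := by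
        intro e μ hμ hm
        have hsub : {t : ℝ | ∃ s : ℝ, 0 ≤ s ∧ s < 1 ∧
            f (Complex.exp (mpt t + ↑s * (e - mpt t))) = 0} ⊆
            ⋃ z ∈ Complex.exp ⁻¹' (f ⁻¹' {0}),
              {t : ℝ | ∃ s : ℝ, 0 ≤ s ∧ s < 1 ∧ z = mpt t + ↑s * (e - mpt t)} := by
          rintro t ⟨s, hs0, hs1, hz⟩
          refine mem_biUnion ?_ ⟨s, hs0, hs1, rfl⟩
          simpa using hz
        exact ((hZt.biUnion fun z _ =>
          (bad_param_subsingleton hDne hμ mpt hm).countable).mono hsub)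
      have hBx := hBad xt (1/2) (by norm_num) hmx
      have hBa := hBad aL (-(1/2)) (by norm_num) hma
      obtain ⟨t, htI, htx, hta⟩ : ∃ t : ℝ, t ∈ Ioo 0 ε ∧
          t ∉ {t : ℝ | ∃ s : ℝ, 0 ≤ s ∧ s < 1 ∧
            f (Complex.exp (mpt t + ↑s * (xt - mpt t))) = 0} ∧
          t ∉ {t : ℝ | ∃ s : ℝ, 0 ≤ s ∧ s < 1 ∧
            f (Complex.exp (mpt t + ↑s * (aL - mpt t))) = 0} := by
        by_contra hcon
        push_neg at hcon
        have hsub : Ioo (0:ℝ) ε ⊆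
            {t : ℝ | ∃ s : ℝ, 0 ≤ s ∧ s < 1 ∧
              f (Complex.exp (mpt t + ↑s * (xt - mpt t))) = 0} ∪
            {t : ℝ | ∃ s : ℝ, 0 ≤ s ∧ s < 1 ∧
              f (Complex.exp (mpt t + ↑s * (aL - mpt t))) = 0} := by
          intro t ht
          by_cases h1 : t ∈ {t : ℝ | ∃ s : ℝ, 0 ≤ s ∧ s < 1 ∧
              f (Complex.exp (mpt t + ↑s * (xt - mpt t))) = 0}
          · exact Or.inl h1
          · exact Or.inr (hcon t ht h1)
        have hm1 : volume (Ioo (0:ℝ) ε) ≤ 0 := by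
          refine le_trans (measure_mono hsub) ?_
          rw [measure_union_null (hBx.measure_zero volume) (hBa.measure_zero volume)]
        rw [Real.volume_Ioo, nonpos_iff_eq_zero, ENNReal.ofReal_eq_zero] at hm1
        linarith
      have hmre : Real.log R < (mpt t).re := by
        rw [hmptre t]
        have h1 : t * (1 + |D.im|) < xt.re + D.re / 2 - Real.log R := by
          rw [hε_def] at htI
          exact (lt_div_iff₀ (by positivity)).1 htI.2
        have h2 : t * D.im ≤ t * |D.im| :=
          mul_le_mul_of_nonneg_left (le_abs_self D.im) htI.1.le
        nlinarith [abs_nonneg D.im, htI.1]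
      -- piece 1 : from the midpoint fiber to s
      have hne_x : ∀ s' : ℝ, 0 ≤ s' → s' < 1 →
          f (Complex.exp (mpt t + (s':ℂ) * (xt - mpt t))) ≠ 0 :=
        fun s' h0 h1 hz => htx ⟨s', h0, h1, hz⟩
      have hne_a : ∀ s' : ℝ, 0 ≤ s' → s' < 1 →
          f (Complex.exp (mpt t + (s':ℂ) * (aL - mpt t))) ≠ 0 :=
        fun s' h0 h1 hz => hta ⟨s', h0, h1, hz⟩
      have hy₂x : y₂ ^ p = f (Complex.exp xt) := by rw [hex]; exact h₂
      have hy₃x : y₃ ^ q = g (Complex.exp xt) := by rw [hex]; exact h₃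
      obtain ⟨v₂, v₃, hv₂, hv₃, u, hu, hJ1⟩ := piece_to (mpt t) xt hmre hxre hne_x y₂ y₃
        hy₂x hy₃x ⟨(x, y₂, y₃), ⟨h₂, h₃⟩⟩ (by rw [hex])
      have hJ2 : JoinedIn W u Pa := by
        refine piece_from (mpt t) aL hmre hare hne_a ?_ ?_ v₂ v₃ hv₂ hv₃ u Pa hu ?_
        · rw [hea]; exact hfa
        · rw [hea]; exact hga
        · rw [hea]
      exact hJ2.symm.trans hJ1
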